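/- arXiv:2512.05786 — 3 statements merged into one kernel-verified Lean document; each statement's English description precedes it below -/
import Mathlib

section
/- For integers k ≥ 2 and 0 ≤ j ≤ k, the coefficient -k + 2j + 1 vanishes if and only if k is odd and j = (k-1)/2. Consequently, for even k the homological operator L_B restricted to degree-k S-equivariant homogeneous vector fields (as in the saddle normal form construction) is surjective onto the space of degree-k S-reversible homogeneous vector fields. -/
open Finset

private lemma pow_aux8 (x : ℝ) (m : ℕ) : x * ((m : ℝ) * x ^ (m - 1)) = (m : ℝ) * x ^ m := by
  cases m with
  | zero => simp
  | succ n => rw [pow_succ]; push_cast; ring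

theorem stmt8 :
    (∀ k : ℕ, 2 ≤ k → ∀ j : ℕ, j ≤ k →
      ((-(k : ℤ) + 2 * j + 1 = 0) ↔ (Odd k ∧ j = (k - 1) / 2))) ∧
    (∀ k : ℕ, 2 ≤ k → Even k →
      ∀ a : ℕ → ℝ, ∃ b : ℕ → ℝ,
        ∀ ξ η : ℝ,
          -- p(ξ,η) = Σ b j ξ^(k-j) η^j, h^k = (p(ξ,η), p(η,ξ)),
          -- q(ξ,η) = Σ a j ξ^(k-j) η^j, X^k = (-q(ξ,η), q(η,ξ)),
          -- L_B h^k = X^k componentwise, with B(ξ,η) = (-ξ, η)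
          ((-ξ) * deriv (fun t => ∑ j ∈ range (k + 1), b j * t ^ (k - j) * η ^ j) ξ
            + η * deriv (fun t => ∑ j ∈ range (k + 1), b j * ξ ^ (k - j) * t ^ j) η
            + (∑ j ∈ range (k + 1), b j * ξ ^ (k - j) * η ^ j)
            = -(∑ j ∈ range (k + 1), a j * ξ ^ (k - j) * η ^ j)) ∧
          ((-ξ) * deriv (fun t => ∑ j ∈ range (k + 1), b j * η ^ (k - j) * t ^ j) ξ
            + η * deriv (fun t => ∑ j ∈ range (k + 1), b j * t ^ (k - j) * ξ ^ j) η
            - (∑ j ∈ range (k + 1), b j * η ^ (k - j) * ξ ^ j)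
            = ∑ j ∈ range (k + 1), a j * η ^ (k - j) * ξ ^ j)) := by
  constructor
  · intro k hk j hj
    rw [Nat.odd_iff]
    omega
  · intro k hk hke a
    have hden : ∀ j : ℕ, (k : ℝ) - 2 * j - 1 ≠ 0 := by
      intro j h
      have h1 : (k : ℝ) = 2 * j + 1 := by linarith
      have h2 : k = 2 * j + 1 := by exact_mod_cast h1
      rw [Nat.even_iff] at hke; omega
    refine ⟨fun j => a j / ((k : ℝ) - 2 * j - 1), fun ξ η => ?_⟩
    set b : ℕ → ℝ := fun j => a j / ((k : ℝ) - 2 * j - 1) with hb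
    have D1 : deriv (fun t => ∑ j ∈ range (k + 1), b j * t ^ (k - j) * η ^ j) ξ
        = ∑ j ∈ range (k + 1), b j * (((k - j : ℕ) : ℝ) * ξ ^ (k - j - 1)) * η ^ j :=
      (HasDerivAt.fun_sum fun j _ =>
        ((hasDerivAt_pow (k - j) ξ).const_mul (b j)).mul_const (η ^ j)).deriv
    have D2 : deriv (fun t => ∑ j ∈ range (k + 1), b j * ξ ^ (k - j) * t ^ j) η
        = ∑ j ∈ range (k + 1), b j * ξ ^ (k - j) * ((j : ℝ) * η ^ (j - 1)) :=
      (HasDerivAt.fun_sum fun j _ =>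
        (hasDerivAt_pow j η).const_mul (b j * ξ ^ (k - j))).deriv
    have D3 : deriv (fun t => ∑ j ∈ range (k + 1), b j * η ^ (k - j) * t ^ j) ξ
        = ∑ j ∈ range (k + 1), b j * η ^ (k - j) * ((j : ℝ) * ξ ^ (j - 1)) :=
      (HasDerivAt.fun_sum fun j _ =>
        (hasDerivAt_pow j ξ).const_mul (b j * η ^ (k - j))).deriv
    have D4 : deriv (fun t => ∑ j ∈ range (k + 1), b j * t ^ (k - j) * ξ ^ j) η
        = ∑ j ∈ range (k + 1), b j * (((k - j : ℕ) : ℝ) * η ^ (k - j - 1)) * ξ ^ j :=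
      (HasDerivAt.fun_sum fun j _ =>
        ((hasDerivAt_pow (k - j) η).const_mul (b j)).mul_const (ξ ^ j)).deriv
    constructor
    · rw [D1, D2, Finset.mul_sum, Finset.mul_sum, ← Finset.sum_neg_distrib,
        ← Finset.sum_add_distrib, ← Finset.sum_add_distrib]
      refine Finset.sum_congr rfl fun j hj => ?_
      have hjk : j ≤ k := Nat.lt_succ_iff.mp (mem_range.mp hj)
      have hK : ((k - j : ℕ) : ℝ) = (k : ℝ) - j := by
        rw [Nat.cast_sub hjk]
      have h1 : ξ * (((k - j : ℕ) : ℝ) * ξ ^ (k - j - 1)) = ((k - j : ℕ) : ℝ) * ξ ^ (k - j) :=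
        pow_aux8 ξ (k - j)
      have h2 : η * ((j : ℝ) * η ^ (j - 1)) = (j : ℝ) * η ^ j := pow_aux8 η j
      rw [hK] at h1 ⊢
      have hd := hden j
      have hc : b j * (-((k : ℝ) - j) + j + 1) = -(a j) := by
        rw [hb]
        field_simp
        ring
      linear_combination (-(b j) * η ^ j) * h1 + (b j * ξ ^ (k - j)) * h2
        + (ξ ^ (k - j) * η ^ j) * hc
    · rw [D3, D4, Finset.mul_sum, Finset.mul_sum,
        ← Finset.sum_add_distrib, ← Finset.sum_sub_distrib]
      refine Finset.sum_congr rfl fun j hj => ?_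
      have hjk : j ≤ k := Nat.lt_succ_iff.mp (mem_range.mp hj)
      have hK : ((k - j : ℕ) : ℝ) = (k : ℝ) - j := by
        rw [Nat.cast_sub hjk]
      have h1 : ξ * ((j : ℝ) * ξ ^ (j - 1)) = (j : ℝ) * ξ ^ j := pow_aux8 ξ j
      have h2 : η * (((k - j : ℕ) : ℝ) * η ^ (k - j - 1)) = ((k - j : ℕ) : ℝ) * η ^ (k - j) :=
        pow_aux8 η (k - j)
      rw [hK] at h2 ⊢
      have hd := hden j
      have hc : b j * (((k : ℝ) - j) - j - 1) = a j := by
        rw [hb]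
        field_simp
        try ring
        try tauto
      linear_combination (-(b j) * η ^ (k - j)) * h1 + (b j * ξ ^ j) * h2
        + (η ^ (k - j) * ξ ^ j) * hc
end

section
/- For every degree-2 homogeneous vector field of the form X²(ξ,η) = (-a₂₀ξ² - a₁₁ξη - a₀₂η², a₀₂ξ² + a₁₁ξη + a₂₀η²), there is a unique homogeneous vector field h²(ξ,η) = (b₂₀ξ² + b₁₁ξη + b₀₂η², b₀₂ξ² + b₁₁ξη + b₂₀η²) with Dh²·B - B·h² = X², and its coefficients are b₂₀ = a₂₀, b₁₁ = -a₁₁, b₀₂ = -a₀₂/3. -/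
lemma L1 (a b c d x : ℝ) : deriv (fun t : ℝ => a * t ^ 2 + b * t * c + d) x = 2 * a * x + b * c := by
  have h : HasDerivAt (fun t : ℝ => a * t ^ 2 + b * t * c + d)
      (a * (2 * x ^ 1) + b * 1 * c) x := by
    exact (((hasDerivAt_pow 2 x).const_mul a).add
      (((hasDerivAt_id x).const_mul b).mul_const c)).add_const d
  have := h.deriv
  rw [this]; ring

lemma L2 (a b d x : ℝ) : deriv (fun t : ℝ => d + b * t + a * t ^ 2) x = b + 2 * a * x := by
  have h : HasDerivAt (fun t : ℝ => d + b * t + a * t ^ 2)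
      (b * 1 + a * (2 * x ^ 1)) x := by
    exact (((hasDerivAt_id x).const_mul b).const_add d).add ((hasDerivAt_pow 2 x).const_mul a)
  have := h.deriv
  rw [this]; ring

def eqnAux (a20 a11 a02 b20 b11 b02 : ℝ) : Prop :=
  ∀ ξ η : ℝ,
        ((-ξ) * deriv (fun t => b20 * t ^ 2 + b11 * t * η + b02 * η ^ 2) ξ
          + η * deriv (fun t => b20 * ξ ^ 2 + b11 * ξ * t + b02 * t ^ 2) η
          + (b20 * ξ ^ 2 + b11 * ξ * η + b02 * η ^ 2)
          = -(a20 * ξ ^ 2) - a11 * ξ * η - a02 * η ^ 2) ∧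
        ((-ξ) * deriv (fun t => b02 * t ^ 2 + b11 * t * η + b20 * η ^ 2) ξ
          + η * deriv (fun t => b02 * ξ ^ 2 + b11 * ξ * t + b20 * t ^ 2) η
          - (b02 * ξ ^ 2 + b11 * ξ * η + b20 * η ^ 2)
          = a02 * ξ ^ 2 + a11 * ξ * η + a20 * η ^ 2)

theorem stmt9 (a20 a11 a02 : ℝ) :
    letI eqn : ℝ → ℝ → ℝ → Prop := fun b20 b11 b02 =>
      ∀ ξ η : ℝ,
        -- first component of Dh²·B - B·h² = X², with B(ξ,η) = (-ξ,η)
        ((-ξ) * deriv (fun t => b20 * t ^ 2 + b11 * t * η + b02 * η ^ 2) ξ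
          + η * deriv (fun t => b20 * ξ ^ 2 + b11 * ξ * t + b02 * t ^ 2) η
          + (b20 * ξ ^ 2 + b11 * ξ * η + b02 * η ^ 2)
          = -(a20 * ξ ^ 2) - a11 * ξ * η - a02 * η ^ 2) ∧
        -- second component
        ((-ξ) * deriv (fun t => b02 * t ^ 2 + b11 * t * η + b20 * η ^ 2) ξ
          + η * deriv (fun t => b02 * ξ ^ 2 + b11 * ξ * t + b20 * t ^ 2) η
          - (b02 * ξ ^ 2 + b11 * ξ * η + b20 * η ^ 2)
          = a02 * ξ ^ 2 + a11 * ξ * η + a20 * η ^ 2)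
    (∃! b : ℝ × ℝ × ℝ, eqn b.1 b.2.1 b.2.2) ∧
      eqn a20 (-a11) (-(a02 / 3)) ∧
      (∀ b20 b11 b02, eqn b20 b11 b02 →
        b20 = a20 ∧ b11 = -a11 ∧ b02 = -(a02 / 3)) := by
  show (∃! b : ℝ × ℝ × ℝ, eqnAux a20 a11 a02 b.1 b.2.1 b.2.2) ∧
      eqnAux a20 a11 a02 a20 (-a11) (-(a02 / 3)) ∧
      (∀ b20 b11 b02, eqnAux a20 a11 a02 b20 b11 b02 →
        b20 = a20 ∧ b11 = -a11 ∧ b02 = -(a02 / 3))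
  have hsat : eqnAux a20 a11 a02 a20 (-a11) (-(a02 / 3)) := by
    intro ξ η
    simp only [eqnAux, L1, L2]
    constructor <;> ring
  have huniq : ∀ b20 b11 b02, eqnAux a20 a11 a02 b20 b11 b02 →
      b20 = a20 ∧ b11 = -a11 ∧ b02 = -(a02 / 3) := by
    intro b20 b11 b02 h
    have h10 := (h 1 0).1
    have h01 := (h 0 1).1
    have h11 := (h 1 1).1
    simp only [L1, L2] at h10 h01 h11
    refine ⟨by linarith, by linarith, by linarith⟩
  refine ⟨⟨(a20, -a11, -(a02 / 3)), hsat, ?_⟩, hsat, huniq⟩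
  rintro ⟨b20, b11, b02⟩ h
  obtain ⟨h1, h2, h3⟩ := huniq b20 b11 b02 h
  simp [h1, h2, h3]
end

section
/- Consider the homological equation Dh³·B - B·h³ = X³ in degree 3, where B(ξ,η) = (-ξ,η), X³(ξ,η) = (-a₃₀ξ³ - a₂₁ξ²η - a₁₂ξη² - a₀₃η³, a₀₃ξ³ + a₁₂ξ²η + a₂₁ξη² + a₃₀η³) and h³(ξ,η) = (b₃₀ξ³ + b₂₁ξ²η + b₁₂ξη² + b₀₃η³, b₀₃ξ³ + b₁₂ξ²η + b₂₁ξη² + b₃₀η³). The equation is solvable if and only if a₂₁ = 0, in which case b₃₀ = a₃₀/2, b₁₂ = -a₁₂/2, b₀₃ = -a₀₃/4, and b₂₁ is arbitrary. -/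
lemma d1' (c3 c2 c1 c0 η ξ : ℝ) :
    deriv (fun t => c3 * t ^ 3 + c2 * t ^ 2 * η + c1 * t * η ^ 2 + c0 * η ^ 3) ξ
      = 3 * c3 * ξ ^ 2 + 2 * c2 * ξ * η + c1 * η ^ 2 := by
  have h : HasDerivAt (fun t => c3 * t ^ 3 + c2 * t ^ 2 * η + c1 * t * η ^ 2 + c0 * η ^ 3)
      (c3 * (3 * ξ ^ 2) + c2 * (2 * ξ ^ 1) * η + c1 * 1 * η ^ 2 + 0) ξ := by
    have := ((((hasDerivAt_pow 3 ξ).const_mul c3).add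
      (((hasDerivAt_pow 2 ξ).const_mul c2).mul_const η)).add
      (((hasDerivAt_id ξ).const_mul c1).mul_const (η ^ 2))).add (hasDerivAt_const ξ (c0 * η ^ 3))
    simpa [Pi.add_def] using this
  rw [h.deriv]; ring

lemma d2' (c3 c2 c1 c0 ξ η : ℝ) :
    deriv (fun t => c3 * ξ ^ 3 + c2 * ξ ^ 2 * t + c1 * ξ * t ^ 2 + c0 * t ^ 3) η
      = c2 * ξ ^ 2 + 2 * c1 * ξ * η + 3 * c0 * η ^ 2 := by
  have h : HasDerivAt (fun t => c3 * ξ ^ 3 + c2 * ξ ^ 2 * t + c1 * ξ * t ^ 2 + c0 * t ^ 3)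
      (0 + c2 * ξ ^ 2 * 1 + c1 * ξ * (2 * η ^ 1) + c0 * (3 * η ^ 2)) η := by
    have := (((hasDerivAt_const η (c3 * ξ ^ 3)).add
      ((hasDerivAt_id η).const_mul (c2 * ξ ^ 2))).add
      ((hasDerivAt_pow 2 η).const_mul (c1 * ξ))).add ((hasDerivAt_pow 3 η).const_mul c0)
    simpa [Pi.add_def, mul_assoc] using this
  rw [h.deriv]; ring

def Eqn (a30 a21 a12 a03 b30 b21 b12 b03 : ℝ) : Prop :=
  ∀ ξ η : ℝ,
    ((-ξ) * deriv (fun t => b30 * t ^ 3 + b21 * t ^ 2 * η + b12 * t * η ^ 2 + b03 * η ^ 3) ξ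
      + η * deriv (fun t => b30 * ξ ^ 3 + b21 * ξ ^ 2 * t + b12 * ξ * t ^ 2 + b03 * t ^ 3) η
      + (b30 * ξ ^ 3 + b21 * ξ ^ 2 * η + b12 * ξ * η ^ 2 + b03 * η ^ 3)
      = -(a30 * ξ ^ 3) - a21 * ξ ^ 2 * η - a12 * ξ * η ^ 2 - a03 * η ^ 3) ∧
    ((-ξ) * deriv (fun t => b03 * t ^ 3 + b12 * t ^ 2 * η + b21 * t * η ^ 2 + b30 * η ^ 3) ξ
      + η * deriv (fun t => b03 * ξ ^ 3 + b12 * ξ ^ 2 * t + b21 * ξ * t ^ 2 + b30 * t ^ 3) η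
      - (b03 * ξ ^ 3 + b12 * ξ ^ 2 * η + b21 * ξ * η ^ 2 + b30 * η ^ 3)
      = a03 * ξ ^ 3 + a12 * ξ ^ 2 * η + a21 * ξ * η ^ 2 + a30 * η ^ 3)

lemma eqn_sol (a30 a21 a12 a03 b21 : ℝ) (ha : a21 = 0) :
    Eqn a30 a21 a12 a03 (a30 / 2) b21 (-(a12 / 2)) (-(a03 / 4)) := by
  intro ξ η
  simp only [d1', d2', ha]
  constructor <;> ring

lemma eqn_ext (a30 a21 a12 a03 b30 b21 b12 b03 : ℝ)
    (h : Eqn a30 a21 a12 a03 b30 b21 b12 b03) :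
    a21 = 0 ∧ b30 = a30 / 2 ∧ b12 = -(a12 / 2) ∧ b03 = -(a03 / 4) := by
  have h10 := h 1 0
  have h01 := h 0 1
  have h11 := h 1 1
  have h1m := h 1 (-1)
  simp only [d1', d2'] at h10 h01 h11 h1m
  obtain ⟨e1, e2⟩ := h10
  obtain ⟨e3, e4⟩ := h01
  obtain ⟨e5, e6⟩ := h11
  obtain ⟨e7, e8⟩ := h1m
  norm_num at e1 e2 e3 e4 e5 e6 e7 e8
  refine ⟨by linarith, by linarith, by linarith, by linarith⟩

theorem stmt10 (a30 a21 a12 a03 : ℝ) :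
    letI eqn : ℝ → ℝ → ℝ → ℝ → Prop := fun b30 b21 b12 b03 =>
      ∀ ξ η : ℝ,
        -- first component of Dh³·B - B·h³ = X³, with B(ξ,η) = (-ξ,η)
        ((-ξ) * deriv (fun t => b30 * t ^ 3 + b21 * t ^ 2 * η + b12 * t * η ^ 2 + b03 * η ^ 3) ξ
          + η * deriv (fun t => b30 * ξ ^ 3 + b21 * ξ ^ 2 * t + b12 * ξ * t ^ 2 + b03 * t ^ 3) η
          + (b30 * ξ ^ 3 + b21 * ξ ^ 2 * η + b12 * ξ * η ^ 2 + b03 * η ^ 3)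
          = -(a30 * ξ ^ 3) - a21 * ξ ^ 2 * η - a12 * ξ * η ^ 2 - a03 * η ^ 3) ∧
        -- second component
        ((-ξ) * deriv (fun t => b03 * t ^ 3 + b12 * t ^ 2 * η + b21 * t * η ^ 2 + b30 * η ^ 3) ξ
          + η * deriv (fun t => b03 * ξ ^ 3 + b12 * ξ ^ 2 * t + b21 * ξ * t ^ 2 + b30 * t ^ 3) η
          - (b03 * ξ ^ 3 + b12 * ξ ^ 2 * η + b21 * ξ * η ^ 2 + b30 * η ^ 3)
          = a03 * ξ ^ 3 + a12 * ξ ^ 2 * η + a21 * ξ * η ^ 2 + a30 * η ^ 3)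
    ((∃ b30 b21 b12 b03 : ℝ, eqn b30 b21 b12 b03) ↔ a21 = 0) ∧
      (∀ b30 b21 b12 b03 : ℝ, eqn b30 b21 b12 b03 →
        b30 = a30 / 2 ∧ b12 = -(a12 / 2) ∧ b03 = -(a03 / 4)) ∧
      (a21 = 0 → ∀ b21 : ℝ, eqn (a30 / 2) b21 (-(a12 / 2)) (-(a03 / 4))) := by
  show ((∃ b30 b21 b12 b03 : ℝ, Eqn a30 a21 a12 a03 b30 b21 b12 b03) ↔ a21 = 0) ∧
      (∀ b30 b21 b12 b03 : ℝ, Eqn a30 a21 a12 a03 b30 b21 b12 b03 →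
        b30 = a30 / 2 ∧ b12 = -(a12 / 2) ∧ b03 = -(a03 / 4)) ∧
      (a21 = 0 → ∀ b21 : ℝ, Eqn a30 a21 a12 a03 (a30 / 2) b21 (-(a12 / 2)) (-(a03 / 4)))
  refine ⟨⟨fun ⟨b30, b21, b12, b03, h⟩ => (eqn_ext a30 a21 a12 a03 b30 b21 b12 b03 h).1,
    fun ha => ⟨a30 / 2, 0, -(a12 / 2), -(a03 / 4), eqn_sol a30 a21 a12 a03 0 ha⟩⟩,
    fun b30 b21 b12 b03 h => (eqn_ext a30 a21 a12 a03 b30 b21 b12 b03 h).2,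
    fun ha b21 => eqn_sol a30 a21 a12 a03 b21 ha⟩
end
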